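/- Let q ∈ ℂ and let 0 < r < 1. Then the counterclockwise circle integral over the circle of radius r centered at −1 of the function m ↦ (−1/m + q/(1+m))²·(1/(1+m)² + q/(1+m)³) equals 2πi·(2q² + 5q + 2). Equivalently, the residue of this function at m = −1 equals 2q² + 5q + 2. -/

import Mathlib

open Complex Metric

private lemma stmt_18_key (q z : ℂ) (h0 : z ≠ 0) (h1 : 1 + z ≠ 0) :
    (-1 / z + q / (1 + z)) ^ 2 * (1 / (1 + z) ^ 2 + q / (1 + z) ^ 3)
      - (2 * q ^ 2 + 5 * q + 2) * (z - -1)⁻¹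
    = -(1 + q) * -(z ^ 2)⁻¹ - (2 * q ^ 2 + 5 * q + 2) * ((-z)⁻¹ * -1)
      - (2 * q ^ 2 + 4 * q + 1) * (-(((1 + z) ^ 1) ^ 2)⁻¹ * ((1:ℂ) * (1 + z) ^ 0 * 1))
      - (2 * q ^ 2 + 3 * q) / 2 * (-(((1 + z) ^ 2) ^ 2)⁻¹ * ((2:ℂ) * (1 + z) ^ 1 * 1))
      - 3 * q ^ 2 / 3 * (-(((1 + z) ^ 3) ^ 2)⁻¹ * ((3:ℂ) * (1 + z) ^ 2 * 1))
      - q ^ 3 / 4 * (-(((1 + z) ^ 4) ^ 2)⁻¹ * ((4:ℂ) * (1 + z) ^ 3 * 1)) := by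
  have hz1 : z - -1 = 1 + z := by ring
  rw [hz1]
  obtain ⟨w, hw⟩ : ∃ w : ℂ, w = 1 + z := ⟨_, rfl⟩
  rw [← hw] at h1 ⊢
  field_simp
  subst hw
  ring

set_option maxHeartbeats 1000000 in
/-- For any `q ∈ ℂ` and `0 < r < 1`, the counterclockwise circle integral
around `−1` of `m ↦ (−1/m + q/(1+m))²·(1/(1+m)² + q/(1+m)³)` equals `2πi·(2q² + 5q + 2)`
(i.e. the residue at `m = −1` equals `2q² + 5q + 2`). -/
theorem stmt_18 (q : ℂ) (r : ℝ) (hr0 : 0 < r) (hr1 : r < 1) :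
    (∮ m in C(-1, r),
        (-1 / m + q / (1 + m)) ^ 2 * (1 / (1 + m) ^ 2 + q / (1 + m) ^ 3))
      = 2 * Real.pi * Complex.I * (2 * q ^ 2 + 5 * q + 2) := by
  set a : ℂ := 2 * q ^ 2 + 5 * q + 2 with ha
  set f : ℂ → ℂ := fun m => (-1 / m + q / (1 + m)) ^ 2 * (1 / (1 + m) ^ 2 + q / (1 + m) ^ 3)
    with hf
  -- basic facts on the sphere
  have key : ∀ z ∈ sphere (-1 : ℂ) r, z ≠ 0 ∧ 1 + z ≠ 0 ∧ z.re < 0 := by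
    intro z hz
    rw [mem_sphere_iff_norm] at hz
    have hz1 : ‖z + 1‖ = r := by rwa [sub_neg_eq_add] at hz
    have h1 : 1 + z ≠ 0 := by
      intro h
      have : z + 1 = 0 := by linear_combination h
      rw [this, norm_zero] at hz1
      exact hr0.ne hz1
    have hre : z.re < 0 := by
      have h2 : |(z + 1).re| ≤ ‖z + 1‖ := Complex.abs_re_le_norm _
      rw [hz1] at h2
      have h3 : (z + 1).re = z.re + 1 := by simp
      rw [h3] at h2
      have := abs_le.mp h2
      linarith [this.2]
    have h0 : z ≠ 0 := by
      intro h
      rw [h] at hre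
      simp at hre
    exact ⟨h0, h1, hre⟩
  -- continuity of f on the sphere
  have hcf : ContinuousOn f (sphere (-1 : ℂ) r) := by
    intro z hz
    obtain ⟨h0, h1, _⟩ := key z hz
    apply ContinuousAt.continuousWithinAt
    have h1p2 : (1 + z) ^ 2 ≠ 0 := pow_ne_zero _ h1
    have h1p3 : (1 + z) ^ 3 ≠ 0 := pow_ne_zero _ h1
    fun_prop (disch := assumption)
  have hcg : ContinuousOn (fun z : ℂ => a * (z - (-1))⁻¹) (sphere (-1 : ℂ) r) := by
    intro z hz
    obtain ⟨h0, h1, _⟩ := key z hz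
    apply ContinuousAt.continuousWithinAt
    have h1' : z - (-1) ≠ 0 := by
      intro h; apply h1; linear_combination h
    fun_prop (disch := assumption)
  have hif : CircleIntegrable f (-1) r := hcf.circleIntegrable hr0.le
  have hig : CircleIntegrable (fun z : ℂ => a * (z - (-1))⁻¹) (-1) r :=
    hcg.circleIntegrable hr0.le
  -- the difference integrates to zero (it has a primitive near the sphere)
  have hzero : (∮ z in C(-1, r), (f z - a * (z - (-1))⁻¹)) = 0 := by
    apply circleIntegral.integral_eq_zero_of_hasDerivWithinAt hr0.le
    intro z hz
    obtain ⟨h0, h1, hre⟩ := key z hz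
    -- primitive
    set P : ℂ → ℂ := fun z => -(1 + q) * z⁻¹ - a * Complex.log (-z)
      - (2 * q ^ 2 + 4 * q + 1) * (1 + z)⁻¹ - ((2 * q ^ 2 + 3 * q) / 2) * ((1 + z) ^ 2)⁻¹
      - (3 * q ^ 2 / 3) * ((1 + z) ^ 3)⁻¹ - (q ^ 3 / 4) * ((1 + z) ^ 4)⁻¹ with hP
    have hu : HasDerivAt (fun z : ℂ => 1 + z) 1 z := by
      simpa using (hasDerivAt_id z).const_add (1 : ℂ)
    have hinv : ∀ k : ℕ, HasDerivAt (fun z : ℂ => ((1 + z) ^ k)⁻¹)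
        (-(((1 + z) ^ k) ^ 2)⁻¹ * ((k : ℂ) * (1 + z) ^ (k - 1) * 1)) z := by
      intro k
      exact (hasDerivAt_inv (pow_ne_zero _ h1)).comp z
        (((hasDerivAt_pow k (1 + z)).comp z hu))
    have hlog : HasDerivAt (fun z : ℂ => Complex.log (-z)) ((-z)⁻¹ * -1) z := by
      have hslit : -z ∈ Complex.slitPlane := by
        rw [Complex.mem_slitPlane_iff]
        left
        simpa using neg_pos.mpr hre
      exact (Complex.hasDerivAt_log hslit).comp z (hasDerivAt_neg z)
    have hzinv : HasDerivAt (fun z : ℂ => z⁻¹) (-(z ^ 2)⁻¹) z := hasDerivAt_inv h0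
    have hD : HasDerivAt P
        (-(1 + q) * (-(z ^ 2)⁻¹) - a * ((-z)⁻¹ * -1)
          - (2 * q ^ 2 + 4 * q + 1) * (-(((1 + z) ^ 1) ^ 2)⁻¹ * ((1 : ℂ) * (1 + z) ^ 0 * 1))
          - ((2 * q ^ 2 + 3 * q) / 2) * (-(((1 + z) ^ 2) ^ 2)⁻¹ * ((2 : ℂ) * (1 + z) ^ 1 * 1))
          - (3 * q ^ 2 / 3) * (-(((1 + z) ^ 3) ^ 2)⁻¹ * ((3 : ℂ) * (1 + z) ^ 2 * 1))
          - (q ^ 3 / 4) * (-(((1 + z) ^ 4) ^ 2)⁻¹ * ((4 : ℂ) * (1 + z) ^ 3 * 1))) z := by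
      have h1inv : HasDerivAt (fun z : ℂ => (1 + z)⁻¹)
          (-(((1 + z) ^ 1) ^ 2)⁻¹ * ((1 : ℂ) * (1 + z) ^ 0 * 1)) z := by
        simpa using hinv 1
      exact (((((hzinv.const_mul (-(1 + q))).sub (hlog.const_mul a)).sub
        (h1inv.const_mul _)).sub ((hinv 2).const_mul _)).sub
        ((hinv 3).const_mul _)).sub ((hinv 4).const_mul _)
    apply HasDerivAt.hasDerivWithinAt
    exact hD.congr_deriv (stmt_18_key q z h0 h1).symm
  -- assemble
  have hsub := circleIntegral.integral_sub hif hig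
  have hgval : (∮ z in C(-1, r), a * (z - (-1))⁻¹) = a * (2 * Real.pi * Complex.I) := by
    have hmem : (-1 : ℂ) ∈ ball (-1 : ℂ) r := mem_ball_self hr0
    have h2 := circleIntegral.integral_sub_inv_of_mem_ball hmem
    calc (∮ z in C(-1, r), a * (z - (-1))⁻¹)
        = (∮ z in C(-1, r), a • (z - (-1))⁻¹) := by simp [smul_eq_mul]
      _ = a • (∮ z in C(-1, r), (z - (-1))⁻¹) := circleIntegral.integral_smul a _ _ _
      _ = a * (2 * Real.pi * Complex.I) := by rw [h2]; simp [smul_eq_mul]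
  have hmain : (∮ z in C(-1, r), f z) = a * (2 * Real.pi * Complex.I) := by
    have h3 := hsub
    rw [hzero] at h3
    have h4 := sub_eq_zero.mp h3.symm
    rw [h4, hgval]
  calc (∮ m in C(-1, r), f m) = a * (2 * Real.pi * Complex.I) := hmain
    _ = 2 * Real.pi * Complex.I * a := by ring
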